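/- arXiv:2305.05716 — 5 statements merged into one kernel-verified Lean document; each statement's English description precedes it below -/
import Mathlib

section
/- Let M ≥ 0, N ≥ 1 be integers and define ‖z^n‖² := 1 + ∑_{j=0}^n |c_j|² where c_j are the Taylor coefficients of φ(z) = z^M/(1−z)^N. Then ‖z^n‖ ≍ n^{N−1/2} as n → ∞. -/
open Finset
open scoped NNReal ENNReal

noncomputable def aCoef (M N : ℕ) (j : ℕ) : ℂ :=
  if M ≤ j then ((j - M + (N - 1)).choose (N - 1) : ℂ) else 0

lemma aux_hasSum (M N : ℕ) (hN : 1 ≤ N) {z : ℂ} (hz : ‖z‖ < 1) :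
    HasSum (fun j => aCoef M N j * z ^ j) (z ^ M / (1 - z) ^ N) := by
  have h1 := hasSum_choose_mul_geometric_of_norm_lt_one (𝕜 := ℂ) (N - 1) hz
  have h2 := h1.mul_left (z ^ M)
  have h3 : (fun n => z ^ M * (((n + (N - 1)).choose (N - 1) : ℂ) * z ^ n))
      = fun n => aCoef M N (n + M) * z ^ (n + M) := by
    funext n
    simp only [aCoef, Nat.le_add_left, if_pos, Nat.add_sub_cancel, pow_add]
    ring
  rw [h3] at h2
  have h4 := (hasSum_nat_add_iff (f := fun j => aCoef M N j * z ^ j) M).mp h2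
  have h5 : ∑ i ∈ Finset.range M, aCoef M N i * z ^ i = 0 := by
    apply Finset.sum_eq_zero
    intro i hi
    simp [aCoef, Nat.not_le.mpr (Finset.mem_range.mp hi)]
  rw [h5, add_zero] at h4
  have h6 : z ^ M * (1 / (1 - z) ^ (N - 1 + 1)) = z ^ M / (1 - z) ^ N := by
    rw [Nat.sub_add_cancel hN]; ring
  rwa [h6] at h4

lemma aux_coef (M N : ℕ) (hN : 1 ≤ N) (j : ℕ) :
    iteratedDeriv j (fun z : ℂ => z ^ M / (1 - z) ^ N) 0 / (j.factorial : ℂ) = aCoef M N j := by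
  set p := FormalMultilinearSeries.ofScalars ℂ (aCoef M N) with hp
  have hnorm : ∀ n, ‖aCoef M N n‖ ≤ (((n + (N - 1)).choose (N - 1) : ℕ) : ℝ) := by
    intro n
    unfold aCoef
    split
    · rename_i h
      rw [Complex.norm_natCast]
      exact_mod_cast Nat.choose_le_choose (N - 1) (by omega)
    · simp
  have hsummable : Summable fun n => ‖p n‖ * ((1/2 : ℝ≥0) : ℝ) ^ n := by
    have hc : ((1/2 : ℝ≥0) : ℝ) = (1/2 : ℝ) := by norm_num
    rw [hc]
    refine Summable.of_nonneg_of_le (fun n => by positivity)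
      (f := fun n => (((n + (N - 1)).choose (N - 1) : ℕ) : ℝ) * (1/2 : ℝ) ^ n)
      (fun n => ?_) ?_
    · rw [hp, FormalMultilinearSeries.ofScalars_norm]
      exact mul_le_mul_of_nonneg_right (hnorm n) (by positivity)
    · have := summable_choose_mul_geometric_of_norm_lt_one (R := ℝ) (N - 1)
        (r := (1/2 : ℝ)) (by rw [Real.norm_eq_abs, abs_of_pos (by norm_num : (0:ℝ) < 1/2)]; norm_num)
      simpa using this
  have hball : HasFPowerSeriesOnBall (fun z : ℂ => z ^ M / (1 - z) ^ N) p 0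
      ((1/2 : ℝ≥0) : ℝ≥0∞) := by
    constructor
    · exact p.le_radius_of_summable hsummable
    · norm_num
    · intro y hy
      rw [mem_emetric_ball_zero_iff] at hy
      have hy1 : ‖y‖ < 1 := by
        have h2 : (‖y‖₊ : ℝ≥0) < (1/2 : ℝ≥0) := by exact_mod_cast hy
        calc ‖y‖ = ((‖y‖₊ : ℝ≥0) : ℝ) := by simp
        _ < ((1/2 : ℝ≥0) : ℝ) := NNReal.coe_lt_coe.mpr h2
        _ < 1 := by norm_num
      have := aux_hasSum M N hN hy1
      rw [zero_add]
      convert this using 2 with n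
      · rfl
      rw [hp, FormalMultilinearSeries.ofScalars_apply_eq]
      simp [smul_eq_mul]
  have hfact := hball.factorial_smul (y := (1 : ℂ)) j
  rw [iteratedDeriv_eq_iteratedFDeriv, ← hfact, hp, FormalMultilinearSeries.ofScalars_apply_eq]
  simp only [one_pow, smul_eq_mul, mul_one, nsmul_eq_mul]
  rw [mul_comm, mul_div_assoc, div_self (by exact_mod_cast j.factorial_ne_zero), mul_one]

/-- With `c_j` the Taylor coefficients of `φ(z) = z^M/(1-z)^N` and
`‖z^n‖² = 1 + ∑_{j=0}^n |c_j|²`, one has `‖z^n‖ ≍ n^(N - 1/2)` as `n → ∞`. -/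
theorem stmt_7 (M N : ℕ) (hN : 1 ≤ N) (c : ℕ → ℂ)
    (hc : ∀ j, c j = iteratedDeriv j (fun z : ℂ => z ^ M / (1 - z) ^ N) 0 / (j.factorial : ℂ))
    (w : ℕ → ℝ) (hw0 : ∀ n, 0 ≤ w n)
    (hw : ∀ n, w n ^ 2 = 1 + ∑ j ∈ Finset.range (n + 1), ‖c j‖ ^ 2) :
    ∃ c₁ c₂ : ℝ, 0 < c₁ ∧ 0 < c₂ ∧ ∃ J : ℕ, ∀ n, J ≤ n →
      c₁ * (n : ℝ) ^ ((N : ℝ) - 1 / 2) ≤ w n ∧ w n ≤ c₂ * (n : ℝ) ^ ((N : ℝ) - 1 / 2) := by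
  obtain ⟨K, rfl⟩ : ∃ K, N = K + 1 := ⟨N - 1, by omega⟩
  have hcj : ∀ j, ‖c j‖ ^ 2
      = (if M ≤ j then (((j - M + K).choose K : ℕ) : ℝ) else 0) ^ 2 := by
    intro j
    rw [hc j, aux_coef M (K+1) (by omega) j]
    unfold aCoef
    simp only [Nat.add_sub_cancel]
    split
    · simp
    · simp
  set C₂ : ℝ := 1 + 2 * ((K:ℝ) + 1) ^ (2 * K) with hC2
  set C₁ : ℝ := 1 / (2 * 4 ^ (2 * K) * ((K.factorial : ℝ)) ^ 2) with hC1
  have hC1pos : 0 < C₁ := by positivity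
  have hC2pos : 0 < C₂ := by positivity
  -- upper bound
  have hub : ∀ n : ℕ, 1 ≤ n → w n ^ 2 ≤ C₂ * (n : ℝ) ^ (2 * K + 1) := by
    intro n hn
    have h1n : (1:ℝ) ≤ (n:ℝ) := by exact_mod_cast hn
    have hterm : ∀ j ∈ Finset.range (n+1), ‖c j‖ ^ 2
        ≤ ((((n + K) ^ K : ℕ)) : ℝ) ^ 2 := by
      intro j hj
      rw [hcj j]
      have hle : (if M ≤ j then (((j - M + K).choose K : ℕ) : ℝ) else 0)
          ≤ ((((n + K) ^ K : ℕ)) : ℝ) := by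
        split
        · have hj' : j - M + K ≤ n + K := by
            have := Finset.mem_range.mp hj; omega
          exact_mod_cast (Nat.choose_le_choose K hj').trans (Nat.choose_le_pow _ _)
        · positivity
      have h0 : (0:ℝ) ≤ (if M ≤ j then (((j - M + K).choose K : ℕ) : ℝ) else 0) := by
        split <;> positivity
      exact pow_le_pow_left₀ h0 hle 2
    have hsum := Finset.sum_le_card_nsmul _ _ _ hterm
    rw [Finset.card_range, nsmul_eq_mul] at hsum
    have hA : ((((n + K) ^ K : ℕ)) : ℝ) ^ 2 ≤ (((K:ℝ)+1) * n) ^ (2 * K) := by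
      push_cast
      rw [← pow_mul, mul_comm K 2]
      apply pow_le_pow_left₀ (by positivity)
      nlinarith
    have hP1 : (1:ℝ) ≤ (n:ℝ) ^ (2*K+1) := one_le_pow₀ h1n
    rw [hw n]
    calc 1 + ∑ j ∈ Finset.range (n + 1), ‖c j‖ ^ 2
        ≤ 1 + ((n:ℝ)+1) * ((((n + K) ^ K : ℕ)) : ℝ) ^ 2 := by
          push_cast at hsum ⊢; linarith
      _ ≤ 1 + (2*(n:ℝ)) * (((K:ℝ)+1) * n) ^ (2*K) := by
          have := mul_le_mul (by linarith : (n:ℝ)+1 ≤ 2*(n:ℝ)) hA (by positivity)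
            (by positivity)
          linarith
      _ = 1 + 2*((K:ℝ)+1)^(2*K) * (n:ℝ)^(2*K+1) := by rw [mul_pow]; ring
      _ ≤ C₂ * (n:ℝ)^(2*K+1) := by
          rw [hC2]
          nlinarith [pow_nonneg (by positivity : (0:ℝ) ≤ (K:ℝ)+1) (2*K)]
  -- lower bound
  have hlb : ∀ n : ℕ, 4 * M + 4 ≤ n → C₁ * (n:ℝ) ^ (2*K+1) ≤ w n ^ 2 := by
    intro n hn
    set q := n / 2 with hq
    have hq1 : M ≤ q := by omega
    have hqn : (n:ℝ) ≤ 2 * ((n + 1 - q : ℕ) : ℝ) := by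
      have : n ≤ 2 * (n + 1 - q) := by omega
      exact_mod_cast this
    have hn4 : (n:ℝ) ≤ 4 * ((q - M + 1 : ℕ) : ℝ) := by
      have : n ≤ 4 * (q - M + 1) := by omega
      exact_mod_cast this
    set D : ℝ := ((n:ℝ)/4) ^ K / (K.factorial : ℝ) with hD
    have hD0 : 0 ≤ D := by positivity
    have hterm : ∀ j ∈ Finset.Ico q (n+1), D ^ 2 ≤ ‖c j‖ ^ 2 := by
      intro j hj
      simp only [Finset.mem_Ico] at hj
      rw [hcj j, if_pos (le_trans hq1 hj.1)]
      apply pow_le_pow_left₀ hD0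
      calc D ≤ (((q - M + 1 : ℕ) : ℝ)) ^ K / (K.factorial : ℝ) := by
            rw [hD]
            gcongr
            linarith [hn4]
        _ ≤ (((q - M + K).choose K : ℕ) : ℝ) := by
            have := Nat.pow_le_choose (α := ℝ) K (q - M + K)
            rwa [show q - M + K + 1 - K = q - M + 1 by omega] at this
        _ ≤ (((j - M + K).choose K : ℕ) : ℝ) := by
            exact_mod_cast Nat.choose_le_choose K (by omega)
    have hsum1 : ((n + 1 - q : ℕ) : ℝ) * D ^ 2
        ≤ ∑ j ∈ Finset.Ico q (n+1), ‖c j‖ ^ 2 := by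
      have := Finset.card_nsmul_le_sum (Finset.Ico q (n+1)) _ _ hterm
      rwa [Nat.card_Ico, nsmul_eq_mul] at this
    have hsub : Finset.Ico q (n+1) ⊆ Finset.range (n+1) := by
      intro j hj
      simp only [Finset.mem_Ico] at hj
      exact Finset.mem_range.mpr hj.2
    have hsum2 : ∑ j ∈ Finset.Ico q (n+1), ‖c j‖ ^ 2
        ≤ ∑ j ∈ Finset.range (n+1), ‖c j‖ ^ 2 :=
      Finset.sum_le_sum_of_subset_of_nonneg hsub (fun j _ _ => by positivity)
    have h4 : ((4:ℝ))^(2*K) ≠ 0 := by positivity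
    have hF : (K.factorial:ℝ) ≠ 0 := by positivity
    have hD2 : D ^ 2 = (n:ℝ)^(2*K) / (4^(2*K) * ((K.factorial:ℝ))^2) := by
      rw [hD, div_pow, ← pow_mul, mul_comm K 2, div_pow, div_div]
    have hpow : (0:ℝ) ≤ (n:ℝ)^(2*K) := by positivity
    have h2 : (n:ℝ)^(2*K+1) ≤ 2 * ((n+1-q:ℕ):ℝ) * (n:ℝ)^(2*K) := by
      rw [pow_succ]
      nlinarith
    have key : C₁ * (n:ℝ)^(2*K+1) ≤ ((n+1-q : ℕ):ℝ) * D ^ 2 := by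
      calc C₁ * (n:ℝ)^(2*K+1) ≤ C₁ * (2 * ((n+1-q:ℕ):ℝ) * (n:ℝ)^(2*K)) :=
            mul_le_mul_of_nonneg_left h2 hC1pos.le
        _ = ((n+1-q:ℕ):ℝ) * ((n:ℝ)^(2*K) / (4^(2*K) * ((K.factorial:ℝ))^2)) := by
            rw [hC1]; field_simp
        _ = ((n+1-q : ℕ):ℝ) * D ^ 2 := by rw [hD2]
    rw [hw n]
    linarith
  -- assemble
  refine ⟨Real.sqrt C₁, Real.sqrt C₂, Real.sqrt_pos.mpr hC1pos, Real.sqrt_pos.mpr hC2pos,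
    4 * M + 4, fun n hn => ?_⟩
  have hn1 : 1 ≤ n := by omega
  have hn0 : (0:ℝ) < n := by exact_mod_cast Nat.lt_of_lt_of_le (by norm_num) hn1
  have he : ((n:ℝ) ^ (((K+1 : ℕ) : ℝ) - 1/2)) ^ 2 = (n:ℝ) ^ (2*K+1) := by
    rw [← Real.rpow_natCast ((n:ℝ) ^ (((K+1:ℕ):ℝ) - 1/2)) 2, ← Real.rpow_mul hn0.le,
      show (((K+1:ℕ):ℝ) - 1/2) * ((2:ℕ):ℝ) = ((2*K+1 : ℕ) : ℝ) by push_cast; ring,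
      Real.rpow_natCast]
  constructor
  · apply le_of_pow_le_pow_left₀ two_ne_zero (hw0 n)
    calc (Real.sqrt C₁ * (n:ℝ) ^ (((K+1:ℕ):ℝ) - 1/2)) ^ 2
        = C₁ * (n:ℝ)^(2*K+1) := by rw [mul_pow, Real.sq_sqrt hC1pos.le, he]
      _ ≤ w n ^ 2 := hlb n hn
  · apply le_of_pow_le_pow_left₀ two_ne_zero (by positivity)
    calc w n ^ 2 ≤ C₂ * (n:ℝ)^(2*K+1) := hub n hn1
      _ = (Real.sqrt C₂ * (n:ℝ) ^ (((K+1:ℕ):ℝ) - 1/2)) ^ 2 := by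
          rw [mul_pow, Real.sq_sqrt hC2pos.le, he]
end

section
/- Let β > 0, γ ∈ (0,1), and for n ≥ 1 let r_n ∈ (0,1) be the unique solution of βγ r_n/(1−r_n)^{γ+1} = n, and set s_n = 1 − r_n. Then s_n = (βγ/n)^{1/(γ+1)} (1 + O(n^{−1/(γ+1)})) as n → ∞. -/
open Set

/-- With `r_n` the solution of `βγ r/(1-r)^(γ+1) = n` and `s_n = 1 - r_n`,
one has `s_n = (βγ/n)^(1/(γ+1)) (1 + O(n^(-1/(γ+1))))` as `n → ∞`. -/
theorem stmt_10 (β γ : ℝ) (hβ : 0 < β) (hγ : γ ∈ Ioo (0 : ℝ) 1)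
    (r : ℕ → ℝ) (hr : ∀ n : ℕ, 1 ≤ n → r n ∈ Ioo (0 : ℝ) 1 ∧
      β * γ * r n / (1 - r n) ^ (γ + 1) = n)
    (s : ℕ → ℝ) (hs : ∀ n, s n = 1 - r n) :
    ∃ C : ℝ, 0 < C ∧ ∃ N : ℕ, ∀ n, N ≤ n →
      |s n - (β * γ / n) ^ (1 / (γ + 1))| ≤
        C * (β * γ / n) ^ (1 / (γ + 1)) * (n : ℝ) ^ (-(1 / (γ + 1))) := by
  obtain ⟨hγ0, hγ1⟩ := hγ
  set p : ℝ := 1 / (γ + 1) with hp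
  have hγ1pos : (0:ℝ) < γ + 1 := by linarith
  have hp0 : 0 < p := by positivity
  have hp1 : p ≤ 1 := by
    rw [hp, div_le_one hγ1pos]; linarith
  have hbγ : 0 < β * γ := mul_pos hβ hγ0
  refine ⟨(β * γ) ^ p, Real.rpow_pos_of_pos hbγ p, 1, fun n hn => ?_⟩
  obtain ⟨⟨hr0, hr1⟩, heq⟩ := hr n hn
  have hn0 : (0:ℝ) < n := by exact_mod_cast hn
  have hs0 : 0 < s n := by rw [hs]; linarith
  have hspow : (s n) ^ (γ + 1) = β * γ * r n / n := by
    have h1 : (0:ℝ) < (1 - r n) ^ (γ + 1) := Real.rpow_pos_of_pos (by linarith) _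
    rw [hs]
    field_simp at heq ⊢
    linarith [heq]
  set a : ℝ := (β * γ / n) ^ p with ha
  have ha0 : 0 < a := Real.rpow_pos_of_pos (by positivity) p
  have key : s n = a * (r n) ^ p := by
    have : s n = ((s n) ^ (γ + 1)) ^ p := by
      rw [← Real.rpow_mul hs0.le]
      · rw [hp, mul_one_div_cancel (ne_of_gt hγ1pos), Real.rpow_one]
    rw [this, hspow]
    rw [show β * γ * r n / n = (β * γ / n) * r n by ring,
      Real.mul_rpow (by positivity) hr0.le]
  have hrp1 : (r n) ^ p ≤ 1 := Real.rpow_le_one hr0.le hr1.le hp0.le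
  have hrpg : r n ≤ (r n) ^ p := by
    have := Real.rpow_le_rpow_of_exponent_ge hr0 hr1.le hp1
    rwa [Real.rpow_one] at this
  have habs : |s n - a| ≤ a * s n := by
    rw [key, show a * (r n) ^ p - a = -(a * (1 - (r n) ^ p)) by ring, abs_neg,
      abs_of_nonneg (by nlinarith)]
    have : 1 - (r n) ^ p ≤ s n := by rw [hs]; linarith
    nlinarith
  have hsa : s n ≤ a := by
    rw [key]; nlinarith
  have hrhs : (β * γ) ^ p * a * (n : ℝ) ^ (-p) = a * a := by
    rw [ha, Real.div_rpow hbγ.le hn0.le, Real.rpow_neg hn0.le]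
    field_simp
  rw [hrhs]
  nlinarith
end

section
/- With β > 0, γ ∈ (0,1), r_n the unique solution in (0,1) of βγr_n/(1−r_n)^{γ+1} = n, and φ(z) = exp(β/(1−z)^γ), we have φ(r_n) ~ exp( β^{1/(γ+1)} γ^{−γ/(γ+1)} n^{γ/(γ+1)} ) as n → ∞, i.e., the ratio of the two sides tends to 1. -/
open Set Filter

/-- `φ(r_n) ~ exp(β^(1/(γ+1)) γ^(-γ/(γ+1)) n^(γ/(γ+1)))` as `n → ∞`. -/
theorem stmt_11 (β γ : ℝ) (hβ : 0 < β) (hγ : γ ∈ Ioo (0 : ℝ) 1)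
    (r : ℕ → ℝ) (hr : ∀ n : ℕ, 1 ≤ n → r n ∈ Ioo (0 : ℝ) 1 ∧
      β * γ * r n / (1 - r n) ^ (γ + 1) = n) :
    Tendsto (fun n : ℕ =>
        Real.exp (β / (1 - r n) ^ γ) /
          Real.exp (β ^ (1 / (γ + 1)) * γ ^ (-(γ / (γ + 1))) * (n : ℝ) ^ (γ / (γ + 1))))
      atTop (nhds 1) := by
  obtain ⟨hγ0, hγ1⟩ := hγ
  have hp : (0:ℝ) < γ + 1 := by linarith
  set θ : ℝ := γ / (γ + 1) with hθdef
  have hθ0 : 0 < θ := div_pos hγ0 hp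
  have hθ1 : θ < 1 := by rw [hθdef, div_lt_one hp]; linarith
  set C : ℝ := β ^ (1 / (γ + 1)) * γ ^ (-θ) with hCdef
  have hCpos : 0 < C :=
    mul_pos (Real.rpow_pos_of_pos hβ _) (Real.rpow_pos_of_pos hγ0 _)
  -- the equation rewritten
  have hbase : ∀ n : ℕ, 1 ≤ n → (1 - r n) ^ (γ + 1) = β * γ * r n / n := by
    intro n hn
    obtain ⟨⟨hr0, hr1⟩, heq⟩ := hr n hn
    have hs : 0 < 1 - r n := by linarith
    have hnpos : (0:ℝ) < n := by exact_mod_cast hn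
    have hsp : (0:ℝ) < (1 - r n) ^ (γ + 1) := Real.rpow_pos_of_pos hs _
    rw [div_eq_iff hsp.ne'] at heq
    rw [eq_div_iff hnpos.ne']
    linear_combination -heq
  -- key exponent identity
  have key : ∀ n : ℕ, 1 ≤ n →
      β / (1 - r n) ^ γ = C * (n:ℝ) ^ θ * r n ^ (-θ) := by
    intro n hn
    obtain ⟨⟨hr0, hr1⟩, -⟩ := hr n hn
    have hs : 0 < 1 - r n := by linarith
    have hnpos : (0:ℝ) < n := by exact_mod_cast hn
    have hγeq : γ = (γ + 1) * θ := by rw [hθdef, mul_div_cancel₀ _ hp.ne']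
    have h2 : (1 - r n) ^ γ = (β * γ * r n / n) ^ θ := by
      conv_lhs => rw [hγeq]
      rw [Real.rpow_mul hs.le, hbase n hn]
    rw [h2]
    have hx : (β * γ * r n / (n:ℝ)) ^ θ
        = β ^ θ * γ ^ θ * r n ^ θ / (n:ℝ) ^ θ := by
      rw [Real.div_rpow (by positivity) (by positivity),
        Real.mul_rpow (by positivity) (by positivity),
        Real.mul_rpow (by positivity) (by positivity)]
    rw [hx]
    have hβsplit : β ^ (1 / (γ + 1)) = β / β ^ θ := by
      rw [eq_div_iff (Real.rpow_pos_of_pos hβ θ).ne', ← Real.rpow_add hβ]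
      have hsum : 1 / (γ + 1) + θ = 1 := by
        rw [hθdef, ← add_div, show (1:ℝ) + γ = γ + 1 from by ring,
          div_self hp.ne']
      rw [hsum, Real.rpow_one]
    rw [hCdef, hβsplit, Real.rpow_neg hγ0.le, Real.rpow_neg hr0.le]
    have h1 : (0:ℝ) < β ^ θ := Real.rpow_pos_of_pos hβ _
    have h2' : (0:ℝ) < γ ^ θ := Real.rpow_pos_of_pos hγ0 _
    have h3 : (0:ℝ) < r n ^ θ := Real.rpow_pos_of_pos hr0 _
    have h4 : (0:ℝ) < (n:ℝ) ^ θ := Real.rpow_pos_of_pos hnpos _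
    field_simp
  -- rewrite the ratio as exp of a difference
  have hfun : (fun n : ℕ =>
        Real.exp (β / (1 - r n) ^ γ) /
          Real.exp (C * (n : ℝ) ^ θ))
      = fun n : ℕ => Real.exp (β / (1 - r n) ^ γ - C * (n : ℝ) ^ θ) := by
    funext n; rw [Real.exp_sub]
  have hC' : (fun n : ℕ => Real.exp (β / (1 - r n) ^ γ) /
          Real.exp (β ^ (1 / (γ + 1)) * γ ^ (-(γ / (γ + 1))) * (n : ℝ) ^ (γ / (γ + 1))))
      = fun n : ℕ => Real.exp (β / (1 - r n) ^ γ - C * (n : ℝ) ^ θ) := by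
    rw [← hfun]
  rw [hC']
  suffices h : Tendsto (fun n : ℕ => β / (1 - r n) ^ γ - C * (n : ℝ) ^ θ)
      atTop (nhds 0) by
    simpa [Function.comp_def] using (Real.continuous_exp.tendsto 0).comp h
  -- the exponent difference tends to 0
  -- eventual positivity threshold: r n ≥ 1/2 eventually
  have hub : ∀ n : ℕ, 1 ≤ n → 1 - r n ≤ (β * γ / n) ^ (1 / (γ + 1)) := by
    intro n hn
    obtain ⟨⟨hr0, hr1⟩, -⟩ := hr n hn
    have hs : 0 < 1 - r n := by linarith
    have hnpos : (0:ℝ) < n := by exact_mod_cast hn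
    have h1 : (1 - r n) ^ (γ + 1) ≤ β * γ / n := by
      rw [hbase n hn, show β * γ / (n:ℝ) = β * γ * 1 / (n:ℝ) from by ring]
      gcongr
    calc 1 - r n = ((1 - r n) ^ (γ + 1)) ^ (1 / (γ + 1)) := by
          rw [← Real.rpow_mul hs.le, mul_one_div, div_self hp.ne', Real.rpow_one]
      _ ≤ (β * γ / n) ^ (1 / (γ + 1)) :=
          Real.rpow_le_rpow (by positivity) h1 (by positivity)
  have htail : Tendsto (fun n : ℕ => (β * γ) ^ (1 / (γ + 1)) * (n:ℝ) ^ (-(1 / (γ + 1))))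
      atTop (nhds 0) := by
    have h0 : Tendsto (fun x : ℝ => x ^ (-(1 / (γ + 1)))) atTop (nhds 0) :=
      tendsto_rpow_neg_atTop (by positivity)
    have := (h0.comp tendsto_natCast_atTop_atTop).const_mul ((β * γ) ^ (1 / (γ + 1)))
    simpa using this
  have hhalf : ∀ᶠ n : ℕ in atTop, 1 / 2 ≤ r n := by
    have h2 : ∀ᶠ n : ℕ in atTop,
        (β * γ) ^ (1 / (γ + 1)) * (n:ℝ) ^ (-(1 / (γ + 1))) < 1 / 2 := by
      have := htail.eventually (eventually_lt_nhds (by norm_num : (0:ℝ) < 1/2))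
      exact this
    filter_upwards [h2, eventually_ge_atTop 1] with n hn2 hn1
    have hnpos : (0:ℝ) < n := by exact_mod_cast hn1
    have heqd : (β * γ / (n:ℝ)) ^ (1 / (γ + 1))
        = (β * γ) ^ (1 / (γ + 1)) * (n:ℝ) ^ (-(1 / (γ + 1))) := by
      rw [Real.div_rpow (by positivity) hnpos.le, Real.rpow_neg hnpos.le, div_eq_mul_inv]
    have := hub n hn1
    rw [heqd] at this
    linarith
  -- squeeze
  have hDform : ∀ n : ℕ, 1 ≤ n →
      β / (1 - r n) ^ γ - C * (n:ℝ) ^ θ = C * (n:ℝ) ^ θ * (r n ^ (-θ) - 1) := by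
    intro n hn
    rw [key n hn]; ring
  have hlow : ∀ᶠ n : ℕ in atTop, (0:ℝ) ≤ β / (1 - r n) ^ γ - C * (n:ℝ) ^ θ := by
    filter_upwards [eventually_ge_atTop 1] with n hn
    obtain ⟨⟨hr0, hr1⟩, -⟩ := hr n hn
    have hnpos : (0:ℝ) < n := by exact_mod_cast hn
    rw [hDform n hn]
    have h1 : 1 ≤ r n ^ (-θ) := by
      rw [Real.rpow_neg hr0.le, le_inv_comm₀ one_pos (Real.rpow_pos_of_pos hr0 θ)]
      simpa using Real.rpow_le_one hr0.le hr1.le hθ0.le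
    have : 0 ≤ r n ^ (-θ) - 1 := by linarith
    positivity
  have hhigh : ∀ᶠ n : ℕ in atTop, β / (1 - r n) ^ γ - C * (n:ℝ) ^ θ
      ≤ 2 * C * (β * γ) ^ (1 / (γ + 1)) * (n:ℝ) ^ ((γ - 1) / (γ + 1)) := by
    filter_upwards [eventually_ge_atTop 1, hhalf] with n hn hhalf2
    obtain ⟨⟨hr0, hr1⟩, -⟩ := hr n hn
    have hnpos : (0:ℝ) < n := by exact_mod_cast hn
    rw [hDform n hn]
    have hstep1 : r n ^ (-θ) ≤ r n ^ (-1 : ℝ) :=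
      Real.rpow_le_rpow_of_exponent_ge hr0 hr1.le (by linarith)
    have hinv : r n ^ (-1 : ℝ) = (r n)⁻¹ := by
      rw [Real.rpow_neg hr0.le, Real.rpow_one]
    have hstep2 : r n ^ (-θ) - 1 ≤ (1 - r n) / r n := by
      rw [hinv] at hstep1
      have h' : (1 - r n) / r n = (r n)⁻¹ - 1 := by
        field_simp
      rw [h']
      linarith
    have hstep3 : (1 - r n) / r n ≤ 2 * (1 - r n) := by
      rw [div_le_iff₀ hr0]
      nlinarith
    have hstep4 : 1 - r n ≤ (β * γ) ^ (1 / (γ + 1)) * (n:ℝ) ^ (-(1 / (γ + 1))) := by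
      have heqd : (β * γ / (n:ℝ)) ^ (1 / (γ + 1))
          = (β * γ) ^ (1 / (γ + 1)) * (n:ℝ) ^ (-(1 / (γ + 1))) := by
        rw [Real.div_rpow (by positivity) hnpos.le, Real.rpow_neg hnpos.le,
          div_eq_mul_inv]
      rw [← heqd]; exact hub n hn
    have hCn : (0:ℝ) < C * (n:ℝ) ^ θ := by positivity
    calc C * (n:ℝ) ^ θ * (r n ^ (-θ) - 1)
        ≤ C * (n:ℝ) ^ θ * (2 * (1 - r n)) := by
          apply mul_le_mul_of_nonneg_left _ hCn.le
          linarith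
      _ ≤ C * (n:ℝ) ^ θ * (2 * ((β * γ) ^ (1 / (γ + 1)) * (n:ℝ) ^ (-(1 / (γ + 1))))) := by
          apply mul_le_mul_of_nonneg_left _ hCn.le
          linarith
      _ = 2 * C * (β * γ) ^ (1 / (γ + 1)) * ((n:ℝ) ^ θ * (n:ℝ) ^ (-(1 / (γ + 1)))) := by
          ring
      _ = 2 * C * (β * γ) ^ (1 / (γ + 1)) * (n:ℝ) ^ ((γ - 1) / (γ + 1)) := by
          rw [← Real.rpow_add hnpos]
          congr 1
          rw [hθdef]
          field_simp
          ring
  have hBtend : Tendsto (fun n : ℕ =>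
      2 * C * (β * γ) ^ (1 / (γ + 1)) * (n:ℝ) ^ ((γ - 1) / (γ + 1))) atTop (nhds 0) := by
    have h0 : Tendsto (fun x : ℝ => x ^ ((γ - 1) / (γ + 1))) atTop (nhds 0) := by
      have hneg : (γ - 1) / (γ + 1) = -((1 - γ) / (γ + 1)) := by ring
      rw [hneg]
      exact tendsto_rpow_neg_atTop (div_pos (by linarith) hp)
    have := (h0.comp tendsto_natCast_atTop_atTop).const_mul (2 * C * (β * γ) ^ (1 / (γ + 1)))
    simpa using this
  exact tendsto_of_tendsto_of_tendsto_of_le_of_le' tendsto_const_nhds hBtend hlow hhigh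
end

section
/- With β > 0, γ ∈ (0,1), and r_n the unique solution in (0,1) of βγ r_n/(1−r_n)^{γ+1} = n, we have r_n^n ~ exp(−(βγ)^{1/(γ+1)} n^{γ/(γ+1)}) as n → ∞. -/
open Set Filter

set_option maxHeartbeats 2000000 in
/-- `r_n^n ~ exp(-(βγ)^(1/(γ+1)) n^(γ/(γ+1)))` as `n → ∞`. -/
theorem stmt_12 (β γ : ℝ) (hβ : 0 < β) (hγ : γ ∈ Ioo (0 : ℝ) 1)
    (r : ℕ → ℝ) (hr : ∀ n : ℕ, 1 ≤ n → r n ∈ Ioo (0 : ℝ) 1 ∧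
      β * γ * r n / (1 - r n) ^ (γ + 1) = n) :
    Tendsto (fun n : ℕ =>
        r n ^ n / Real.exp (-((β * γ) ^ (1 / (γ + 1)) * (n : ℝ) ^ (γ / (γ + 1)))))
      atTop (nhds 1) := by
  obtain ⟨hγ0, hγ1⟩ := hγ
  have hγ1' : (0:ℝ) < γ + 1 := by linarith
  have hβγ : (0:ℝ) < β * γ := by positivity
  set c : ℝ := (β * γ) ^ (1 / (γ + 1)) with hc
  have hcpos : 0 < c := Real.rpow_pos_of_pos hβγ _
  set q : ℝ := γ / (γ + 1) with hq
  set s : ℝ := (γ - 1) / (γ + 1) with hs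
  have hsneg : s < 0 := div_neg_of_neg_of_pos (by linarith) hγ1'
  set K : ℝ := c * c with hK
  clear_value c q s K
  have hKpos : 0 < K := hK ▸ mul_pos hcpos hcpos
  have key : Tendsto (fun n : ℕ => (n : ℝ) * Real.log (r n) + c * (n : ℝ) ^ q)
      atTop (nhds 0) := by
    apply squeeze_zero_norm' (a := fun n : ℕ => 2 * K * (n : ℝ) ^ s)
    · filter_upwards [eventually_ge_atTop 1, eventually_gt_atTop ⌈2 * (β * γ)⌉₊]
        with n hn1 hn2
      obtain ⟨⟨hr0, hr1⟩, heq⟩ := hr n hn1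
      have hn0 : (0:ℝ) < n := by exact_mod_cast hn1
      have hn2βγ : 2 * (β * γ) < (n:ℝ) := by
        have h1 : 2 * (β * γ) ≤ (⌈2 * (β * γ)⌉₊ : ℝ) := Nat.le_ceil _
        have h2 : ((⌈2 * (β * γ)⌉₊ : ℕ) : ℝ) < (n:ℝ) := by exact_mod_cast hn2
        linarith
      set ε : ℝ := 1 - r n with hεdef
      clear_value ε
      have hε0 : 0 < ε := by simp only [hεdef]; linarith
      have hε1 : ε < 1 := by simp only [hεdef]; linarith
      have hεp : (0:ℝ) < ε ^ (γ + 1) := Real.rpow_pos_of_pos hε0 _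
      have hrn0 : 0 < β * γ * r n := by positivity
      have heq2 : ε ^ (γ + 1) = β * γ * r n / n := by
        rw [div_eq_iff hεp.ne'] at heq
        rw [eq_div_iff hn0.ne']
        linarith
      set a : ℝ := (β * γ * r n) ^ (1 / (γ + 1)) with ha
      clear_value a
      have ha0 : 0 < a := ha ▸ Real.rpow_pos_of_pos hrn0 (1/(γ+1))
      have hac : a ≤ c := by
        rw [ha, hc]
        apply Real.rpow_le_rpow hrn0.le _ (by positivity)
        nlinarith
      have hεeq : ε = a * (n:ℝ) ^ (-(1 / (γ + 1))) := by
        have h1 : ε = (ε ^ (γ + 1)) ^ (1 / (γ + 1)) := by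
          rw [← Real.rpow_mul hε0.le, mul_one_div, div_self hγ1'.ne', Real.rpow_one]
        rw [h1, heq2, Real.div_rpow hrn0.le hn0.le, Real.rpow_neg hn0.le,
          div_eq_mul_inv, ← ha]
      have hnε : (n:ℝ) * ε = a * (n:ℝ) ^ q := by
        rw [hεeq, show (n:ℝ) * (a * (n:ℝ) ^ (-(1 / (γ + 1))))
            = a * ((n:ℝ) ^ (1:ℝ) * (n:ℝ) ^ (-(1 / (γ + 1)))) by
          rw [Real.rpow_one]; ring, ← Real.rpow_add hn0]
        congr 1
        rw [hq]; field_simp; ring_nf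
      have hqε : (n:ℝ) ^ q * ε = a * (n:ℝ) ^ s := by
        rw [hεeq, show (n:ℝ) ^ q * (a * (n:ℝ) ^ (-(1 / (γ + 1))))
            = a * ((n:ℝ) ^ q * (n:ℝ) ^ (-(1 / (γ + 1)))) by ring,
          ← Real.rpow_add hn0]
        congr 1
        rw [hq, hs]; field_simp; ring
      have hnε2 : (n:ℝ) * (ε * ε) = a * a * (n:ℝ) ^ s := by
        have : (n:ℝ) * (ε * ε) = ((n:ℝ) ^ q * ε) * ((n:ℝ) ^ (1 - q) * ε) := by
          rw [show (n:ℝ) ^ q * ε * ((n:ℝ) ^ (1 - q) * ε)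
              = ((n:ℝ) ^ q * (n:ℝ) ^ (1 - q)) * (ε * ε) by ring,
            ← Real.rpow_add hn0]
          norm_num
        rw [this, hqε, hεeq, show a * (n:ℝ) ^ s * ((n:ℝ) ^ (1 - q)
            * (a * (n:ℝ) ^ (-(1 / (γ + 1)))))
            = a * a * ((n:ℝ) ^ s * ((n:ℝ) ^ (1 - q) * (n:ℝ) ^ (-(1 / (γ + 1))))) by
          ring, ← Real.rpow_add hn0, ← Real.rpow_add hn0]
        congr 2
        rw [hs, hq]; field_simp; ring
      have hnspos : (0:ℝ) < (n:ℝ) ^ s := Real.rpow_pos_of_pos hn0 _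
      -- r n > 1/2
      have hrhalf : 1 / 2 < r n := by
        by_contra h
        push_neg at h
        have hεhalf : (1:ℝ)/2 ≤ ε := by simp only [hεdef]; linarith
        have h14 : (1:ℝ)/4 ≤ ε ^ (γ + 1) := by
          have h1 : ((1:ℝ)/2) ^ (γ + 1) ≤ ε ^ (γ + 1) :=
            Real.rpow_le_rpow (by norm_num) hεhalf hγ1'.le
          have h2 : ((1:ℝ)/2) ^ (γ + 1) = ((1:ℝ)/2) ^ γ * ((1:ℝ)/2) := by
            rw [Real.rpow_add (by norm_num : (0:ℝ) < 1/2) γ 1, Real.rpow_one]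
          have h3 : ((1:ℝ)/2 : ℝ) ^ (1:ℝ) ≤ ((1:ℝ)/2) ^ γ :=
            Real.rpow_le_rpow_of_exponent_ge (by norm_num) (by norm_num) hγ1.le
          rw [Real.rpow_one] at h3
          nlinarith
        have : (n:ℝ) ≤ 2 * (β * γ) := by
          rw [← heq, div_le_iff₀ hεp]
          have h5 := mul_le_mul_of_nonneg_left h hβγ.le
          have h6 := mul_le_mul_of_nonneg_left h14 (show (0:ℝ) ≤ 2 * (β * γ) by linarith)
          calc β * γ * r n ≤ β * γ * (1/2) := h5
            _ = 2 * (β * γ) * (1/4) := by ring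
            _ ≤ 2 * (β * γ) * (ε ^ (γ + 1)) := h6
            _ = 2 * (β * γ) * ε ^ (γ + 1) := by ring
        linarith
      -- decomposition
      have hlogub : Real.log (r n) ≤ -ε := by
        have := Real.log_le_sub_one_of_pos hr0
        simp only [hεdef]; linarith
      have hloglb : -(ε / r n) ≤ Real.log (r n) := by
        have h1 : Real.log (r n)⁻¹ ≤ (r n)⁻¹ - 1 :=
          Real.log_le_sub_one_of_pos (by positivity)
        rw [Real.log_inv] at h1
        have h2 : (r n)⁻¹ - 1 = ε / r n := by
          rw [hεdef]; field_simp
        linarith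
      -- term1 bounds
      have ht1ub : (n:ℝ) * Real.log (r n) + (n:ℝ) * ε ≤ 0 := by
        have h0 := mul_le_mul_of_nonneg_left hlogub hn0.le
        have h0' : (n:ℝ) * -ε = -((n:ℝ) * ε) := by ring
        rw [h0'] at h0
        linarith
      have ht1lb : -(2 * ((n:ℝ) * (ε * ε))) ≤ (n:ℝ) * Real.log (r n) + (n:ℝ) * ε := by
        have h1 := mul_le_mul_of_nonneg_left hloglb hn0.le
        have h1' : (n:ℝ) * -(ε / r n) = -((n:ℝ) * (ε / r n)) := by ring
        rw [h1'] at h1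
        have h2 : ε / r n ≤ ε + 2 * (ε * ε) := by
          rw [div_le_iff₀ hr0]
          have hre : r n = 1 - ε := by linarith
          have hk : (ε + 2 * (ε * ε)) * r n - ε = ε * ε * (2 * r n - 1) := by
            rw [hre]; ring
          have hk2 : 0 ≤ ε * ε * (2 * r n - 1) :=
            mul_nonneg (mul_nonneg hε0.le hε0.le) (by linarith)
          linarith
        have h3 := mul_le_mul_of_nonneg_left h2 hn0.le
        have h4 : (n:ℝ) * (ε + 2 * (ε * ε)) = (n:ℝ) * ε + 2 * ((n:ℝ) * (ε * ε)) := by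
          ring
        rw [h4] at h3
        linarith
      -- term2 bounds
      have hac2 : a = c * (r n) ^ (1 / (γ + 1)) := by
        rw [ha, hc, ← Real.mul_rpow hβγ.le hr0.le]
      have hrp1 : (r n) ^ (1 / (γ + 1)) ≤ 1 :=
        Real.rpow_le_one hr0.le hr1.le (by positivity)
      have hrpr : r n ≤ (r n) ^ (1 / (γ + 1)) := by
        have := Real.rpow_le_rpow_of_exponent_ge hr0 hr1.le
          (show 1 / (γ + 1) ≤ 1 by rw [div_le_one hγ1']; linarith)
        rwa [Real.rpow_one] at this
      have ht2lb : 0 ≤ c * (n:ℝ) ^ q - (n:ℝ) * ε := by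
        rw [hnε]
        have hnq : (0:ℝ) < (n:ℝ) ^ q := Real.rpow_pos_of_pos hn0 _
        have := mul_le_mul_of_nonneg_right hac hnq.le
        linarith
      have ht2ub : c * (n:ℝ) ^ q - (n:ℝ) * ε ≤ K * (n:ℝ) ^ s := by
        have hca : c - a ≤ c * ε := by
          rw [hac2, hεdef]
          have h0 : 1 - (r n) ^ (1 / (γ + 1)) ≤ 1 - r n := by linarith
          have := mul_le_mul_of_nonneg_left h0 hcpos.le
          linarith
        have hnq : (0:ℝ) < (n:ℝ) ^ q := Real.rpow_pos_of_pos hn0 _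
        have h1 : c * (n:ℝ) ^ q - (n:ℝ) * ε = (n:ℝ) ^ q * (c - a) := by
          rw [hnε]; ring
        have h2 : (n:ℝ) ^ q * (c - a) ≤ (n:ℝ) ^ q * (c * ε) :=
          mul_le_mul_of_nonneg_left hca hnq.le
        have h3 : (n:ℝ) ^ q * (c * ε) = c * (a * (n:ℝ) ^ s) := by
          rw [← hqε]; ring
        have h4 : c * (a * (n:ℝ) ^ s) ≤ K * (n:ℝ) ^ s := by
          rw [hK]
          have h5 := mul_le_mul_of_nonneg_right hac hnspos.le
          have h6 := mul_le_mul_of_nonneg_left h5 hcpos.le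
          linarith
        linarith
      -- combine
      have hnε2K : (n:ℝ) * (ε * ε) ≤ K * (n:ℝ) ^ s := by
        rw [hnε2, hK]
        have h5 : a * a ≤ c * c := mul_le_mul hac hac ha0.le hcpos.le
        exact mul_le_mul_of_nonneg_right h5 hnspos.le
      rw [Real.norm_eq_abs, abs_le]
      constructor
      · have h7 : -(2 * (K * (n:ℝ) ^ s)) ≤ ((n:ℝ) * Real.log (r n) + (n:ℝ) * ε)
            + (c * (n:ℝ) ^ q - (n:ℝ) * ε) := by
          linarith
        calc -(2 * K * (n:ℝ) ^ s) = -(2 * (K * (n:ℝ) ^ s)) := by ring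
          _ ≤ _ := by linarith
      · have h8 : 0 ≤ K * (n:ℝ) ^ s := (mul_pos hKpos hnspos).le
        linarith
    · have h1 : Tendsto (fun n : ℕ => ((n:ℝ)) ^ s) atTop (nhds 0) := by
        have h2 := (tendsto_rpow_neg_atTop (show (0:ℝ) < -s by linarith)).comp
          tendsto_natCast_atTop_atTop
        simpa [Function.comp_def] using h2
      have := h1.const_mul (2 * K)
      simpa using this
  have hev : ∀ᶠ n : ℕ in atTop,
      Real.exp ((n : ℝ) * Real.log (r n) + c * (n : ℝ) ^ q)
        = r n ^ n / Real.exp (-(c * (n:ℝ) ^ q)) := by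
    filter_upwards [eventually_ge_atTop 1] with n hn1
    obtain ⟨⟨hr0, hr1⟩, -⟩ := hr n hn1
    rw [Real.exp_add, Real.exp_neg, div_eq_mul_inv, inv_inv]
    congr 1
    rw [← Real.log_pow, Real.exp_log (pow_pos hr0 n)]
  have hfin := (Real.continuous_exp.tendsto 0).comp key
  rw [Real.exp_zero] at hfin
  exact Tendsto.congr' hev hfin
end

section
/- Let β > 0 and γ ∈ (0,1), and suppose the Taylor coefficients c_n of φ(z) = exp(β/(1−z)^γ) satisfy c_n ~ φ(r_n)/(r_n^n √(2π B(r_n))) where r_n solves A(r_n) = n with A(r) = βγr/(1−r)^{γ+1} and B(r) = βγr(1+γr)/(1−r)^{γ+2}. Then c_n ~ exp(C n^{γ/(γ+1)}) / (D n^{(γ+2)/(2γ+2)}) as n → ∞, where C = (βγ)^{1/(γ+1)}(1 + 1/γ) and D = √(2π(γ+1)/(βγ)^{1/(γ+1)}). -/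
open Set Filter Real Topology

lemma aux_div_iden (a b s v d : ℝ) (hb : b ≠ 0) (hs : s ≠ 0) (hv : v ≠ 0) (hd : d ≠ 0) :
    a / b / v * (d / s) = a / (b * s) / (v / d) := by
  field_simp

lemma aux_exp_bounds (β γ x m : ℝ) (hβ : 0 < β) (hγ0 : 0 < γ) (hγ1 : γ < 1)
    (hx0 : 0 < x) (hx1 : x < 1)
    (hm : β * γ * x / (1 - x) ^ (γ + 1) = m) :
    -(β * γ) * (1 - x) ^ (1 - γ) ≤
        β / (1 - x) ^ γ - m * Real.log x
          - (β * γ) ^ (1 / (γ + 1)) * (1 + 1 / γ) * m ^ (γ / (γ + 1)) ∧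
      β / (1 - x) ^ γ - m * Real.log x
          - (β * γ) ^ (1 / (γ + 1)) * (1 + 1 / γ) * m ^ (γ / (γ + 1)) ≤
        β * (γ + 1) * (1 - x) ^ (1 - γ) := by
  have hδ : 0 < 1 - x := by linarith
  have hγp : 0 < γ + 1 := by linarith
  have hγp' : γ + 1 ≠ 0 := ne_of_gt hγp
  have hβγ : 0 < β * γ := mul_pos hβ hγ0
  have hP : 0 < (1 - x) ^ γ := Real.rpow_pos_of_pos hδ γ
  have hPden : 0 < (1 - x) ^ (γ + 1) := Real.rpow_pos_of_pos hδ (γ + 1)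
  have hm0 : 0 < m := by rw [← hm]; positivity
  have hsplit : (1 - x) ^ (γ + 1) = (1 - x) ^ γ * (1 - x) := by
    rw [Real.rpow_add hδ, Real.rpow_one]
  -- x^a bounds
  have hq1 : x ^ (γ / (γ + 1)) ≤ 1 := Real.rpow_le_one hx0.le hx1.le (by positivity)
  have hq2 : x ≤ x ^ (γ / (γ + 1)) := by
    nth_rewrite 1 [← Real.rpow_one x]
    exact Real.rpow_le_rpow_of_exponent_ge hx0 hx1.le (by rw [div_le_one hγp]; linarith)
  -- m^a formula
  have hexp : (γ + 1) * (γ / (γ + 1)) = γ := by field_simp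
  have hma : m ^ (γ / (γ + 1)) = (β * γ) ^ (γ / (γ + 1)) * x ^ (γ / (γ + 1)) / (1 - x) ^ γ := by
    rw [← hm, Real.div_rpow (by positivity) (by positivity),
      Real.mul_rpow hβγ.le hx0.le, ← Real.rpow_mul hδ.le, hexp]
  have h1 : (β * γ) ^ (1 / (γ + 1)) * (β * γ) ^ (γ / (γ + 1)) = β * γ := by
    have h : 1 / (γ + 1) + γ / (γ + 1) = 1 := by
      rw [← add_div, add_comm]; exact div_self hγp'
    rw [← Real.rpow_add hβγ, h, Real.rpow_one]
  have hCm : (β * γ) ^ (1 / (γ + 1)) * (1 + 1 / γ) * m ^ (γ / (γ + 1))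
      = β * (γ + 1) * x ^ (γ / (γ + 1)) / (1 - x) ^ γ := by
    rw [hma, show (β * γ) ^ (1 / (γ + 1)) * (1 + 1 / γ) *
        ((β * γ) ^ (γ / (γ + 1)) * x ^ (γ / (γ + 1)) / (1 - x) ^ γ)
      = (β * γ) ^ (1 / (γ + 1)) * (β * γ) ^ (γ / (γ + 1)) * (1 + 1 / γ)
        * x ^ (γ / (γ + 1)) / (1 - x) ^ γ from by ring, h1,
      show β * γ * (1 + 1 / γ) = β * (γ + 1) from by field_simp [ne_of_gt hγ0]]
  -- log bounds
  have hlog1 : Real.log x ≤ x - 1 := Real.log_le_sub_one_of_pos hx0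
  have hlog2 : -Real.log x ≤ (1 - x) / x := by
    have h := Real.log_le_sub_one_of_pos (inv_pos.mpr hx0)
    rw [Real.log_inv] at h
    have hx' : x⁻¹ - 1 = (1 - x) / x := by field_simp
    linarith [hx' ▸ h]
  have hmdP : m * (1 - x) * (1 - x) ^ γ = β * γ * x := by
    rw [← hm, hsplit]
    field_simp
  have hu1 : β * γ * x ≤ -(m * Real.log x) * (1 - x) ^ γ := by
    rw [← hmdP]
    have h : m * (1 - x) ≤ -(m * Real.log x) := by nlinarith
    exact mul_le_mul_of_nonneg_right h hP.le
  have hu2 : -(m * Real.log x) * (1 - x) ^ γ ≤ β * γ := by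
    have h : -(m * Real.log x) ≤ m * ((1 - x) / x) := by nlinarith
    calc -(m * Real.log x) * (1 - x) ^ γ ≤ m * ((1 - x) / x) * (1 - x) ^ γ :=
          mul_le_mul_of_nonneg_right h hP.le
      _ = m * (1 - x) * (1 - x) ^ γ / x := by ring
      _ = β * γ * x / x := by rw [hmdP]
      _ = β * γ := by field_simp
  have hkey : β / (1 - x) ^ γ - m * Real.log x
      - (β * γ) ^ (1 / (γ + 1)) * (1 + 1 / γ) * m ^ (γ / (γ + 1))
      = (β + (-(m * Real.log x) * (1 - x) ^ γ) - β * (γ + 1) * x ^ (γ / (γ + 1)))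
          / (1 - x) ^ γ := by
    rw [hCm]
    field_simp
    ring
  have h1γ : (1 - x) ^ (1 - γ) = (1 - x) / (1 - x) ^ γ := by
    rw [Real.rpow_sub hδ, Real.rpow_one]
  have hfac : 0 ≤ β * (γ + 1) := by positivity
  constructor
  · rw [hkey, h1γ, show -(β * γ) * ((1 - x) / (1 - x) ^ γ)
      = -(β * γ) * (1 - x) / (1 - x) ^ γ from by ring]
    rw [div_le_div_iff_of_pos_right hP]
    nlinarith [mul_le_mul_of_nonneg_left hq1 hfac]
  · rw [hkey, h1γ, show β * (γ + 1) * ((1 - x) / (1 - x) ^ γ)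
      = β * (γ + 1) * (1 - x) / (1 - x) ^ γ from by ring]
    rw [div_le_div_iff_of_pos_right hP]
    nlinarith [mul_le_mul_of_nonneg_left hq2 hfac]

lemma aux_sqrt_ratio (β γ x m : ℝ) (hβ : 0 < β) (hγ0 : 0 < γ) (hγ1 : γ < 1)
    (hx0 : 0 < x) (hx1 : x < 1)
    (hm : β * γ * x / (1 - x) ^ (γ + 1) = m) :
    Real.sqrt (2 * π * (γ + 1) / (β * γ) ^ (1 / (γ + 1))) * m ^ ((γ + 2) / (2 * γ + 2)) /
        Real.sqrt (2 * π * (β * γ * x * (1 + γ * x) / (1 - x) ^ (γ + 2)))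
      = Real.sqrt ((γ + 1) * x ^ (1 / (γ + 1)) / (1 + γ * x)) := by
  have hδ : 0 < 1 - x := by linarith
  have hγp : 0 < γ + 1 := by linarith
  have hγp' : γ + 1 ≠ 0 := ne_of_gt hγp
  have hβγ : 0 < β * γ := mul_pos hβ hγ0
  have hπ : 0 < π := Real.pi_pos
  have hm0 : 0 < m := by rw [← hm]; positivity
  have hA : 0 < 2 * π * (γ + 1) / (β * γ) ^ (1 / (γ + 1)) := by positivity
  have hX : 0 < 2 * π * (β * γ * x * (1 + γ * x) / (1 - x) ^ (γ + 2)) := by positivity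
  have hgx : 0 < 1 + γ * x := by positivity
  have hLnn : 0 ≤ Real.sqrt (2 * π * (γ + 1) / (β * γ) ^ (1 / (γ + 1)))
      * m ^ ((γ + 2) / (2 * γ + 2)) / Real.sqrt (2 * π * (β * γ * x * (1 + γ * x) / (1 - x) ^ (γ + 2))) := by
    positivity
  rw [← Real.sqrt_sq hLnn]
  congr 1
  rw [div_pow, mul_pow, Real.sq_sqrt hA.le, Real.sq_sqrt hX.le]
  -- (m ^ b) ^ 2 = m ^ ((γ+2)/(γ+1))
  have hsq : (m ^ ((γ + 2) / (2 * γ + 2))) ^ (2 : ℕ) = m ^ ((γ + 2) / (γ + 1)) := by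
    rw [← Real.rpow_natCast (m ^ ((γ + 2) / (2 * γ + 2))) 2, ← Real.rpow_mul hm0.le]
    congr 1
    push_cast
    rw [show 2 * γ + 2 = 2 * (γ + 1) by ring]
    field_simp
  rw [hsq]
  -- m ^ ((γ+2)/(γ+1)) = β*γ*(β*γ)^(1/(γ+1)) * (x * x^(1/(γ+1))) / (1-x)^(γ+2)
  have hmE : m ^ ((γ + 2) / (γ + 1))
      = β * γ * (β * γ) ^ (1 / (γ + 1)) * (x * x ^ (1 / (γ + 1))) / (1 - x) ^ (γ + 2) := by
    rw [← hm, Real.div_rpow (by positivity) (by positivity),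
      Real.mul_rpow hβγ.le hx0.le, ← Real.rpow_mul hδ.le]
    rw [show (γ + 1) * ((γ + 2) / (γ + 1)) = γ + 2 by field_simp]
    rw [show (γ + 2) / (γ + 1) = 1 + 1 / (γ + 1) by field_simp; ring]
    rw [Real.rpow_add hβγ, Real.rpow_add hx0, Real.rpow_one, Real.rpow_one]
  rw [hmE]
  have hPne : ((1 : ℝ) - x) ^ (γ + 2) ≠ 0 := ne_of_gt (Real.rpow_pos_of_pos hδ _)
  have hBne : (β * γ) ^ (1 / (γ + 1)) ≠ 0 := ne_of_gt (Real.rpow_pos_of_pos hβγ _)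
  field_simp

/-- Assuming Hayman's asymptotic formula for the Taylor coefficients of
`φ(z) = exp(β/(1-z)^γ)`, one gets
`c_n ~ exp(C n^(γ/(γ+1))) / (D n^((γ+2)/(2γ+2)))` with the stated constants. -/
theorem stmt_14 (β γ : ℝ) (hβ : 0 < β) (hγ : γ ∈ Ioo (0 : ℝ) 1)
    (r : ℕ → ℝ) (hr : ∀ n : ℕ, 1 ≤ n → r n ∈ Ioo (0 : ℝ) 1 ∧
      β * γ * r n / (1 - r n) ^ (γ + 1) = n)
    (B : ℝ → ℝ) (hB : ∀ t : ℝ, B t = β * γ * t * (1 + γ * t) / (1 - t) ^ (γ + 2))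
    (c : ℕ → ℝ)
    (hc : Tendsto (fun n : ℕ =>
        c n / (Real.exp (β / (1 - r n) ^ γ) / (r n ^ n * Real.sqrt (2 * π * B (r n)))))
      atTop (nhds 1)) :
    Tendsto (fun n : ℕ =>
        c n / (Real.exp ((β * γ) ^ (1 / (γ + 1)) * (1 + 1 / γ) * (n : ℝ) ^ (γ / (γ + 1))) /
          (Real.sqrt (2 * π * (γ + 1) / (β * γ) ^ (1 / (γ + 1))) *
            (n : ℝ) ^ ((γ + 2) / (2 * γ + 2)))))
      atTop (nhds 1) := by
  obtain ⟨hγ0, hγ1⟩ := hγ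
  have hγp : (0 : ℝ) < γ + 1 := by linarith
  have hβγ : (0 : ℝ) < β * γ := mul_pos hβ hγ0
  have hπ : (0 : ℝ) < π := Real.pi_pos
  -- δ n := 1 - r n tends to 0
  have hδ0 : Tendsto (fun n : ℕ => 1 - r n) atTop (nhds 0) := by
    have hub : ∀ᶠ n : ℕ in atTop, 1 - r n ≤ (β * γ / (n : ℝ)) ^ (1 / (γ + 1)) := by
      filter_upwards [eventually_ge_atTop 1] with n hn
      obtain ⟨⟨h0, h1⟩, heq⟩ := hr n hn
      have hδ : 0 < 1 - r n := by linarith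
      have hn0 : (0 : ℝ) < n := by exact_mod_cast hn
      have hpow : 0 < (1 - r n) ^ (γ + 1) := Real.rpow_pos_of_pos hδ _
      rw [div_eq_iff (ne_of_gt hpow)] at heq
      have h2 : (1 - r n) ^ (γ + 1) ≤ β * γ / (n : ℝ) := by
        rw [le_div_iff₀ hn0]
        nlinarith
      have h3 : ((1 - r n) ^ (γ + 1)) ^ (1 / (γ + 1)) = 1 - r n := by
        rw [← Real.rpow_mul hδ.le, mul_one_div, div_self (ne_of_gt hγp), Real.rpow_one]
      calc 1 - r n = ((1 - r n) ^ (γ + 1)) ^ (1 / (γ + 1)) := h3.symm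
        _ ≤ (β * γ / (n : ℝ)) ^ (1 / (γ + 1)) :=
            Real.rpow_le_rpow hpow.le h2 (by positivity)
    have hlb : ∀ᶠ n : ℕ in atTop, 0 ≤ 1 - r n := by
      filter_upwards [eventually_ge_atTop 1] with n hn
      have := (hr n hn).1.2
      linarith
    have hub0 : Tendsto (fun n : ℕ => (β * γ / (n : ℝ)) ^ (1 / (γ + 1))) atTop (nhds 0) := by
      have h1 : Tendsto (fun n : ℕ => β * γ / (n : ℝ)) atTop (nhds 0) :=
        tendsto_const_div_atTop_nhds_zero_nat _
      have hcont := (Real.continuousAt_rpow_const 0 (1 / (γ + 1)) (Or.inr (by positivity))).tendsto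
      have := hcont.comp h1
      simpa only [Function.comp_def, Real.zero_rpow (show 1 / (γ + 1) ≠ 0 by positivity)]
        using this
    exact tendsto_of_tendsto_of_tendsto_of_le_of_le' tendsto_const_nhds hub0 hlb hub
  have hr1 : Tendsto (fun n : ℕ => r n) atTop (nhds 1) := by
    have h := (tendsto_const_nhds (x := (1 : ℝ)) (f := atTop)).sub hδ0
    simpa using h
  -- the exponent tends to 0
  have hpow0 : Tendsto (fun n : ℕ => (1 - r n) ^ (1 - γ)) atTop (nhds 0) := by
    have hcont := (Real.continuousAt_rpow_const 0 (1 - γ) (Or.inr (by linarith))).tendsto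
    have := hcont.comp hδ0
    simpa [Function.comp_def, Real.zero_rpow (show (1 : ℝ) - γ ≠ 0 by intro h; linarith)] using this
  have hE0 : Tendsto (fun n : ℕ => β / (1 - r n) ^ γ - (n : ℝ) * Real.log (r n)
      - (β * γ) ^ (1 / (γ + 1)) * (1 + 1 / γ) * (n : ℝ) ^ (γ / (γ + 1))) atTop (nhds 0) := by
    have hlow : Tendsto (fun n : ℕ => -(β * γ) * (1 - r n) ^ (1 - γ)) atTop (nhds 0) := by
      have := hpow0.const_mul (-(β * γ))
      simpa using this
    have hupp : Tendsto (fun n : ℕ => β * (γ + 1) * (1 - r n) ^ (1 - γ)) atTop (nhds 0) := by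
      have := hpow0.const_mul (β * (γ + 1))
      simpa using this
    refine tendsto_of_tendsto_of_tendsto_of_le_of_le' hlow hupp ?_ ?_
    · filter_upwards [eventually_ge_atTop 1] with n hn
      obtain ⟨⟨h0, h1⟩, heq⟩ := hr n hn
      exact (aux_exp_bounds β γ (r n) (n : ℝ) hβ hγ0 hγ1 h0 h1 heq).1
    · filter_upwards [eventually_ge_atTop 1] with n hn
      obtain ⟨⟨h0, h1⟩, heq⟩ := hr n hn
      exact (aux_exp_bounds β γ (r n) (n : ℝ) hβ hγ0 hγ1 h0 h1 heq).2
  have hexp1 : Tendsto (fun n : ℕ => Real.exp (β / (1 - r n) ^ γ - (n : ℝ) * Real.log (r n)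
      - (β * γ) ^ (1 / (γ + 1)) * (1 + 1 / γ) * (n : ℝ) ^ (γ / (γ + 1)))) atTop (nhds 1) := by
    have := (Real.continuous_exp.tendsto 0).comp hE0
    simpa [Function.comp_def, Real.exp_zero] using this
  -- the sqrt ratio tends to 1
  have hQ : Tendsto (fun n : ℕ =>
      Real.sqrt ((γ + 1) * (r n) ^ (1 / (γ + 1)) / (1 + γ * r n))) atTop (nhds 1) := by
    have h1 : Tendsto (fun n : ℕ => (r n) ^ (1 / (γ + 1))) atTop (nhds 1) := by
      have := hr1.rpow_const (p := 1 / (γ + 1)) (Or.inl one_ne_zero)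
      simpa using this
    have h2 : Tendsto (fun n : ℕ => 1 + γ * r n) atTop (nhds (1 + γ)) := by
      have := (hr1.const_mul γ).const_add 1
      simpa using this
    have h3 : Tendsto (fun n : ℕ => (γ + 1) * (r n) ^ (1 / (γ + 1)) / (1 + γ * r n))
        atTop (nhds 1) := by
      have := (h1.const_mul (γ + 1)).div h2 (by linarith)
      have heq : (γ + 1) * 1 / (1 + γ) = 1 := by
        rw [mul_one, show 1 + γ = γ + 1 by ring, div_self (ne_of_gt hγp)]
      rwa [heq] at this
    have := h3.sqrt
    simpa [Real.sqrt_one] using this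
  -- main ratio tends to 1
  have hmain : Tendsto (fun n : ℕ =>
      (Real.exp (β / (1 - r n) ^ γ) / (r n ^ n * Real.sqrt (2 * π * B (r n)))) /
        (Real.exp ((β * γ) ^ (1 / (γ + 1)) * (1 + 1 / γ) * (n : ℝ) ^ (γ / (γ + 1))) /
          (Real.sqrt (2 * π * (γ + 1) / (β * γ) ^ (1 / (γ + 1))) *
            (n : ℝ) ^ ((γ + 2) / (2 * γ + 2))))) atTop (nhds 1) := by
    have hprod := hexp1.mul hQ
    rw [mul_one] at hprod
    refine hprod.congr' ?_
    filter_upwards [eventually_ge_atTop 1] with n hn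
    obtain ⟨⟨h0, h1⟩, heq⟩ := hr n hn
    have hδ : 0 < 1 - r n := by linarith
    have hn0 : (0 : ℝ) < n := by exact_mod_cast hn
    have hXpos : 0 < 2 * π * B (r n) := by
      rw [hB]
      positivity
    have hrexp : r n ^ n = Real.exp ((n : ℝ) * Real.log (r n)) := by
      rw [← Real.log_pow, Real.exp_log (pow_pos h0 n)]
    have hsq : Real.sqrt ((γ + 1) * (r n) ^ (1 / (γ + 1)) / (1 + γ * r n))
        = Real.sqrt (2 * π * (γ + 1) / (β * γ) ^ (1 / (γ + 1))) *
            (n : ℝ) ^ ((γ + 2) / (2 * γ + 2)) /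
          Real.sqrt (2 * π * B (r n)) := by
      rw [hB (r n)]
      exact (aux_sqrt_ratio β γ (r n) (n : ℝ) hβ hγ0 hγ1 h0 h1 heq).symm
    rw [hsq, hrexp, Real.exp_sub, Real.exp_sub]
    have hsX : (0 : ℝ) < Real.sqrt (2 * π * B (r n)) := Real.sqrt_pos.mpr hXpos
    have hDv : (0 : ℝ) < Real.sqrt (2 * π * (γ + 1) / (β * γ) ^ (1 / (γ + 1))) :=
      Real.sqrt_pos.mpr (by positivity)
    have hnb : (0 : ℝ) < (n : ℝ) ^ ((γ + 2) / (2 * γ + 2)) := Real.rpow_pos_of_pos hn0 _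
    exact aux_div_iden _ _ _ _ _ (Real.exp_ne_zero _) (ne_of_gt hsX) (Real.exp_ne_zero _)
      (ne_of_gt (mul_pos hDv hnb))
  -- conclude
  have hfinal := hc.mul hmain
  rw [mul_one] at hfinal
  refine hfinal.congr' ?_
  filter_upwards [eventually_ge_atTop 1] with n hn
  obtain ⟨⟨h0, h1⟩, heq⟩ := hr n hn
  have hδ : 0 < 1 - r n := by linarith
  have hXpos : 0 < 2 * π * B (r n) := by
    rw [hB]
    positivity
  have hH : 0 < Real.exp (β / (1 - r n) ^ γ) / (r n ^ n * Real.sqrt (2 * π * B (r n))) := by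
    have h2 : 0 < r n ^ n := pow_pos h0 n
    have h3 : 0 < Real.sqrt (2 * π * B (r n)) := Real.sqrt_pos.mpr hXpos
    positivity
  rw [div_mul_div_comm, mul_comm (c n), mul_div_mul_left _ _ (ne_of_gt hH)]
end
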